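/- Let A = (Σ, Q, δ, I) be a top-down tree automaton and let ≡up(id) := ⊆up(id) ∩ (⊆up(id))⁻¹ be the equivalence induced by the upward trace inclusion induced by the identity relation. Then ≡up(id) is good for quotienting, i.e., L(A/≡up(id)) = L(A). -/

import Mathlib

/-- A tree over a ranked alphabet: a partial map from nodes (lists of child
indices) to symbols, with finite, prefix-closed domain respecting ranks. -/
structure RTree (α : Type) (rank : α → ℕ) where
  label : List ℕ → Option α
  finite : Set.Finite {v : List ℕ | label v ≠ none}
  prefixClosed : ∀ v i, label (v ++ [i]) ≠ none → ∃ a, label v = some a ∧ i < rank a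

namespace RTree

variable {α : Type} {rank : α → ℕ}

/-- A tree is closed if every node has all the children prescribed by the rank
of its symbol. -/
def IsClosed (t : RTree α rank) : Prop :=
  ∀ v a, t.label v = some a → ∀ i, i < rank a → t.label (v ++ [i]) ≠ none

/-- The domain of a run on `t`: the nodes of `t` together with all (possibly
dangling) children of nodes of `t`. -/
def inRunDom (t : RTree α rank) (v : List ℕ) : Prop :=
  t.label v ≠ none ∨ ∃ v' i a, v = v' ++ [i] ∧ t.label v' = some a ∧ i < rank a

/-- A leaf of `t`: a node of `t` with no children in `t`. -/
def IsLeaf (t : RTree α rank) (v : List ℕ) : Prop :=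
  t.label v ≠ none ∧ ∀ i, t.label (v ++ [i]) = none

end RTree

/-- A (nondeterministic, top-down) tree automaton, with a distinguished final
state `top`; leaf rules have right-hand side `[top]`, and rules for symbols of
positive rank have right-hand side of length equal to the rank. -/
structure TDTA (Q α : Type) (rank : α → ℕ) where
  top : Q
  init : Set Q
  delta : Set (Q × α × List Q)
  rank_ok : ∀ τ ∈ delta, (rank τ.2.1 = 0 → τ.2.2 = [top]) ∧
    (0 < rank τ.2.1 → τ.2.2.length = rank τ.2.1)

namespace TDTA

variable {Q α : Type} {rank : α → ℕ}

/-- The right-hand side that a run `π` must match at node `v` labelled `a`. -/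
def rhsOf (A : TDTA Q α rank) (a : α) (π : List ℕ → Q) (v : List ℕ) : List Q :=
  if rank a = 0 then [A.top] else (List.range (rank a)).map fun i => π (v ++ [i])

/-- `π` is a run of `A` on the tree `t`. -/
def IsRun (A : TDTA Q α rank) (t : RTree α rank) (π : List ℕ → Q) : Prop :=
  ∀ v a, t.label v = some a → (π v, a, A.rhsOf a π v) ∈ A.delta

/-- The downward language of a state: closed trees accepted from it. -/
def dlang (A : TDTA Q α rank) (q : Q) : Set (RTree α rank) :=
  {t | t.IsClosed ∧ ∃ π, A.IsRun t π ∧ π [] = q}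

/-- The language of the automaton. -/
def lang (A : TDTA Q α rank) : Set (RTree α rank) :=
  {t | ∃ q ∈ A.init, t ∈ A.dlang q}

/-- Pruning: keep exactly the transitions that are maximal w.r.t. `P`. -/
def prune (A : TDTA Q α rank) (P : Q × α × List Q → Q × α × List Q → Prop) :
    TDTA Q α rank where
  top := A.top
  init := A.init
  delta := {τ | τ ∈ A.delta ∧ ¬∃ τ' ∈ A.delta, P τ τ'}
  rank_ok := fun τ hτ => A.rank_ok τ hτ.1

/-- Downward trace inclusion `q ⊆dw r`. -/
def dwIncl (A : TDTA Q α rank) (q r : Q) : Prop :=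
  ∀ t : RTree α rank, t.IsClosed → ∀ π, A.IsRun t π → π [] = q →
    ∃ π', A.IsRun t π' ∧ π' [] = r

/-- Upward trace inclusion `q ⊆up(R) r` induced by a relation `R`. -/
def upIncl (A : TDTA Q α rank) (R : Q → Q → Prop) (q r : Q) : Prop :=
  (q = A.top → r = A.top) ∧
  ∀ (t : RTree α rank) (v : List ℕ), t.IsLeaf v →
    ∀ πq, A.IsRun t πq → πq v = q →
      ∃ πr, A.IsRun t πr ∧ πr v = r ∧
        (∀ v', v' <+: v → πq v' ∈ A.init → πr v' ∈ A.init) ∧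
        ∀ v' x, v' <+: v → v' ≠ v → t.inRunDom (v' ++ [x]) → ¬(v' ++ [x]) <+: v →
          R (πq (v' ++ [x])) (πr (v' ++ [x]))

/-- `D` is a downward simulation on `A`. -/
def IsDwSim (A : TDTA Q α rank) (D : Q → Q → Prop) : Prop :=
  ∀ q r, D q r → (q = A.top → r = A.top) ∧
    ∀ a qs, (q, a, qs) ∈ A.delta →
      ∃ rs, (r, a, rs) ∈ A.delta ∧ List.Forall₂ D qs rs

/-- The maximal downward simulation `≼dw` (the union of all downward
simulations). -/
def dwSim (A : TDTA Q α rank) (q r : Q) : Prop :=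
  ∃ D, A.IsDwSim D ∧ D q r

/-- `U` is an upward simulation on `A` induced by `R`. -/
def IsUpSim (A : TDTA Q α rank) (R U : Q → Q → Prop) : Prop :=
  ∀ q r, U q r → (q = A.top → r = A.top) ∧ (q ∈ A.init → r ∈ A.init) ∧
    ∀ q' a qs, (q', a, qs) ∈ A.delta → ∀ i : Fin qs.length, qs.get i = q →
      ∃ r' rs, ∃ hlen : rs.length = qs.length, (r', a, rs) ∈ A.delta ∧
        rs.get (Fin.cast hlen.symm i) = r ∧ U q' r' ∧
        ∀ j : Fin qs.length, j ≠ i → R (qs.get j) (rs.get (Fin.cast hlen.symm j))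

/-- The maximal upward simulation `≼up(R)` induced by `R`. -/
def upSim (A : TDTA Q α rank) (R : Q → Q → Prop) (q r : Q) : Prop :=
  ∃ U, A.IsUpSim R U ∧ U q r

/-- `W` is a downup-relation on `A`. -/
def IsDownUp (A : TDTA Q α rank) (W : Q → Q → Prop) : Prop :=
  ∀ p q, W p q → ∀ (t : RTree α rank) (π : List ℕ → Q), A.IsRun t π → π [] = p →
    ∃ π', A.IsRun t π' ∧ π' [] = q ∧ ∀ v, t.inRunDom v → A.upSim W (π v) (π' v)

end TDTA

/-- The strict version `S ∖ S⁻¹` of a relation `S`. -/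
def strictOf {Q : Type} (S : Q → Q → Prop) (q r : Q) : Prop := S q r ∧ ¬S r q

/-- Lifting of relations to tuples: pointwise `Dw` everywhere and `Ds` at some
position. -/
def liftStrict {Q : Type} (Dw Ds : Q → Q → Prop) (qs rs : List Q) : Prop :=
  List.Forall₂ Dw qs rs ∧
    ∃ (i : ℕ) (h : i < qs.length) (h' : i < rs.length), Ds (qs.get ⟨i, h⟩) (rs.get ⟨i, h'⟩)

/-- The pruning relation `P(U, Dl)` comparing transitions with the same symbol:
sources by `U`, target tuples by `Dl`. -/
def pruneRel {Q α : Type} (U : Q → Q → Prop) (Dl : List Q → List Q → Prop) :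
    Q × α × List Q → Q × α × List Q → Prop :=
  fun τ τ' => U τ.1 τ'.1 ∧ τ.2.1 = τ'.2.1 ∧ Dl τ.2.2 τ'.2.2

/-- The quotient automaton `A/≡` w.r.t. a setoid `s` on its states. -/
def TDTA.quotAut {Q α : Type} {rank : α → ℕ} (A : TDTA Q α rank) (s : Setoid Q) :
    TDTA (Quotient s) α rank where
  top := Quotient.mk s A.top
  init := {x | ∃ q ∈ A.init, x = Quotient.mk s q}
  delta := {τ | ∃ q a qs, (q, a, qs) ∈ A.delta ∧
    τ = (Quotient.mk s q, a, qs.map fun p => Quotient.mk s p)}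
  rank_ok := by
    rintro τ ⟨q, a, qs, hmem, rfl⟩
    refine ⟨fun h0 => ?_, fun h0 => ?_⟩
    · have h : qs = [A.top] := (A.rank_ok _ hmem).1 h0
      simp [h]
    · simpa using (A.rank_ok _ hmem).2 h0

section GFQHelpers

variable {Q α : Type} {rank : α → ℕ}

lemma RTree.label_ne_none_of_prefix (t : RTree α rank) :
    ∀ (w v : List ℕ), t.label (v ++ w) ≠ none → t.label v ≠ none := by
  intro w
  induction w using List.reverseRecOn with
  | nil => intro v h; simpa using h
  | append_singleton w i ih =>
    intro v h
    rw [← List.append_assoc] at h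
    obtain ⟨a, ha, -⟩ := t.prefixClosed (v ++ w) i h
    exact ih v (by rw [ha]; exact Option.some_ne_none a)

private def oneTree (a : α) : RTree α rank where
  label v := if v = [] then some a else none
  finite := (Set.finite_singleton ([] : List ℕ)).subset (by
    intro v hv
    simp only [Set.mem_setOf_eq] at hv
    by_contra h
    simp only [Set.mem_singleton_iff] at h
    rw [if_neg h] at hv
    exact hv rfl)
  prefixClosed := by
    intro v i h
    have h' : (if v ++ [i] = [] then some a else none) ≠ none := h
    rw [if_neg (by simp)] at h'
    exact absurd rfl h'

lemma rhsOf_eq (A : TDTA Q α rank) {p : Q} {a : α} {ps : List Q}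
    (h : (p, a, ps) ∈ A.delta) (π : List ℕ → Q) (v : List ℕ)
    (hπ : ∀ (i : ℕ) (h1 : i < ps.length), i < rank a → π (v ++ [i]) = ps[i]) :
    A.rhsOf a π v = ps := by
  unfold TDTA.rhsOf
  split
  · exact ((A.rank_ok _ h).1 (by assumption)).symm
  · rename_i h0
    have hl : ps.length = rank a := (A.rank_ok _ h).2 (Nat.pos_of_ne_zero h0)
    apply List.ext_getElem (by simp [hl])
    intro i h1 h2
    simp only [List.getElem_map, List.getElem_range]
    exact hπ i h2 (by simpa using h1)

lemma rhsOf_congr (A : TDTA Q α rank) (a : α) (π π' : List ℕ → Q) (v : List ℕ)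
    (h : ∀ i, i < rank a → π (v ++ [i]) = π' (v ++ [i])) :
    A.rhsOf a π v = A.rhsOf a π' v := by
  unfold TDTA.rhsOf
  split
  · rfl
  · exact List.map_congr_left (by intro i hi; exact h i (List.mem_range.mp hi))

private def oneRun (p : Q) (ps : List Q) : List ℕ → Q
  | [] => p
  | j :: _ => ps.getD j p

lemma oneRun_isRun (A : TDTA Q α rank) {p : Q} {a : α} {ps : List Q}
    (h : (p, a, ps) ∈ A.delta) : A.IsRun (oneTree a) (oneRun p ps) := by
  intro v b hv
  by_cases hv0 : v = []
  · subst hv0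
    have hb : b = a := by
      simp [oneTree] at hv
      exact hv.symm
    subst hb
    have he : A.rhsOf b (oneRun p ps) [] = ps := by
      apply rhsOf_eq A h
      intro i h1 _
      simp only [List.nil_append]
      exact List.getD_eq_getElem ps p h1
    rw [he]
    exact h
  · exfalso
    simp only [oneTree, if_neg hv0] at hv
    exact nomatch hv

lemma oneTree_leaf (a : α) : (oneTree (rank := rank) a).IsLeaf [] :=
  ⟨by simp [RTree.IsLeaf, oneTree], fun i => by simp [oneTree]⟩

lemma run_transfer (A : TDTA Q α rank) {q r : Q} {a : α} {ps : List Q}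
    (h : (q, a, ps) ∈ A.delta) (hup : A.upIncl Eq q r) :
    ∃ π, A.IsRun (oneTree (rank := rank) a) π ∧ π [] = r := by
  obtain ⟨πr, h1, h2, -, -⟩ := hup.2 (oneTree a) [] (oneTree_leaf a) (oneRun q ps)
      (oneRun_isRun A h) rfl
  exact ⟨πr, h1, h2⟩

lemma rule_transfer (A : TDTA Q α rank) {q r : Q} {a : α} {ps : List Q}
    (h : (q, a, ps) ∈ A.delta) (hup : A.upIncl Eq q r) :
    ∃ qs, (r, a, qs) ∈ A.delta := by
  obtain ⟨π, h1, h2⟩ := run_transfer A h hup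
  have h3 := h1 [] a (by simp [oneTree])
  rw [h2] at h3
  exact ⟨_, h3⟩

lemma init_transfer (A : TDTA Q α rank) {q r : Q} {a : α} {ps : List Q}
    (h : (q, a, ps) ∈ A.delta) (hq : q ∈ A.init) (hup : A.upIncl Eq q r) :
    r ∈ A.init := by
  obtain ⟨πr, -, h2, h3, -⟩ := hup.2 (oneTree a) [] (oneTree_leaf a) (oneRun q ps)
      (oneRun_isRun A h) rfl
  have h4 := h3 [] (List.prefix_refl _) hq
  rwa [h2] at h4

lemma quot_rule (A : TDTA Q α rank) (s : Setoid Q) {t : RTree α rank}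
    {F : List ℕ → Quotient s} (hF : (A.quotAut s).IsRun t F) {v : List ℕ} {a : α}
    (hv : t.label v = some a) :
    ∃ p ps, (p, a, ps) ∈ A.delta ∧ F v = Quotient.mk s p ∧
      ∀ (i : ℕ) (h1 : i < ps.length), i < rank a → Quotient.mk s ps[i] = F (v ++ [i]) := by
  obtain ⟨p, a', ps, hmem, heq⟩ := hF v a hv
  simp only [Prod.mk.injEq] at heq
  obtain ⟨h1, h2, h3⟩ := heq
  subst h2
  refine ⟨p, ps, hmem, h1, ?_⟩
  intro i hi1 hi2
  have h0 : rank a ≠ 0 := Nat.ne_zero_of_lt hi2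
  unfold TDTA.rhsOf at h3
  rw [if_neg h0] at h3
  have h5 := List.getElem_of_eq h3.symm (i := i) (by simpa using hi1)
  simp only [List.getElem_map, List.getElem_range] at h5
  exact h5

lemma up_pair (A : TDTA Q α rank) (s : Setoid Q)
    (hs : ∀ q r, s.r q r ↔ (A.upIncl Eq q r ∧ A.upIncl Eq r q)) {q r : Q}
    (h : Quotient.mk s q = Quotient.mk s r) : A.upIncl Eq q r ∧ A.upIncl Eq r q :=
  (hs q r).1 (Quotient.exact h)

open Classical in
private noncomputable def trunc (t : RTree α rank) (S : Set (List ℕ)) : RTree α rank where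
  label v := if ∀ u, u <+: v → u ∈ S then t.label v else none
  finite := t.finite.subset (by
    intro v hv
    simp only [Set.mem_setOf_eq] at hv ⊢
    intro h
    apply hv
    split
    · exact h
    · rfl)
  prefixClosed := by
    intro v i h
    have h' : (if ∀ u, u <+: v ++ [i] → u ∈ S then t.label (v ++ [i]) else none) ≠ none := h
    by_cases hc : ∀ u, u <+: v ++ [i] → u ∈ S
    · rw [if_pos hc] at h'
      obtain ⟨a, ha, hr⟩ := t.prefixClosed v i h'
      refine ⟨a, ?_, hr⟩
      show (if ∀ u, u <+: v → u ∈ S then t.label v else none) = some a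
      rw [if_pos fun u hu => hc u (hu.trans (List.prefix_append v [i])), ha]
    · rw [if_neg hc] at h'
      exact absurd rfl h'

lemma trunc_label_eq (t : RTree α rank) (S : Set (List ℕ)) (v : List ℕ)
    (h : ∀ u, u <+: v → u ∈ S) : (trunc t S).label v = t.label v := by
  simp only [trunc]
  rw [if_pos h]

lemma trunc_label_none (t : RTree α rank) (S : Set (List ℕ)) (v : List ℕ)
    (h : ¬ ∀ u, u <+: v → u ∈ S) : (trunc t S).label v = none := by
  simp only [trunc]
  rw [if_neg h]

lemma trunc_label_cases {t : RTree α rank} {S : Set (List ℕ)} {v : List ℕ} {a : α}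
    (h : (trunc t S).label v = some a) :
    (∀ u, u <+: v → u ∈ S) ∧ t.label v = some a := by
  by_cases hc : ∀ u, u <+: v → u ∈ S
  · exact ⟨hc, by rwa [trunc_label_eq t S v hc] at h⟩
  · rw [trunc_label_none t S v hc] at h
    exact nomatch h

lemma run_of_trunc (A : TDTA Q α rank) (t : RTree α rank) (S : Set (List ℕ))
    (hS : ∀ v, t.label v ≠ none → v ∈ S) {ρ : List ℕ → Q}
    (h : A.IsRun (trunc t S) ρ) : A.IsRun t ρ := by
  intro v a hv
  have hall : ∀ u, u <+: v → u ∈ S := by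
    intro u hu
    obtain ⟨w, rfl⟩ := hu
    exact hS u (RTree.label_ne_none_of_prefix t w u (by rw [hv]; exact Option.some_ne_none a))
  exact h v a (by rw [trunc_label_eq t S v hall]; exact hv)

end GFQHelpers

section GFQBase

variable {Q α : Type} {rank : α → ℕ}

private lemma base_lemma (A : TDTA Q α rank) (s : Setoid Q)
    (hs : ∀ q r, s.r q r ↔ (A.upIncl Eq q r ∧ A.upIncl Eq r q))
    (t : RTree α rank) (F : List ℕ → Quotient s)
    (hF : (A.quotAut s).IsRun t F) {a0 : α} (ha0 : t.label [] = some a0)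
    {q0 : Q} (hq0 : q0 ∈ A.init) (hq0x : F [] = Quotient.mk s q0) :
    ∃ ρ, A.IsRun (trunc t {[]}) ρ ∧ ρ [] ∈ A.init ∧
      ∀ v a i, v ∈ ({[]} : Set (List ℕ)) → t.label v = some a → i < rank a →
        (v ++ [i]) ∉ ({[]} : Set (List ℕ)) → Quotient.mk s (ρ (v ++ [i])) = F (v ++ [i]) := by
  classical
  obtain ⟨p, ps, hmem, hFp, hcl⟩ := quot_rule A s hF ha0
  have hpq : Quotient.mk s p = Quotient.mk s q0 := by rw [← hFp, hq0x]
  obtain ⟨hup1, hup2⟩ := up_pair A s hs hpq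
  obtain ⟨qs2, hqs2⟩ := rule_transfer A hmem hup1
  have hpinit : p ∈ A.init := init_transfer A hqs2 hq0 hup2
  have hlen : ∀ i : ℕ, i < rank a0 → i < ps.length := by
    intro i hi
    rw [(A.rank_ok _ hmem).2 (Nat.pos_of_ne_zero (Nat.ne_zero_of_lt hi))]
    exact hi
  refine ⟨fun w => if w = [] then p else ps.getD w.headI p, ?_, by simp [hpinit], ?_⟩
  · intro v b hv
    obtain ⟨hall, hvl⟩ := trunc_label_cases hv
    have hv0 : v = [] := hall v (List.prefix_refl v)
    subst hv0
    have hb : b = a0 := by rw [ha0] at hvl; exact ((Option.some.injEq _ _).mp hvl.symm)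
    subst hb
    have he : A.rhsOf b (fun w => if w = [] then p else ps.getD w.headI p) [] = ps := by
      apply rhsOf_eq A hmem
      intro i h1 _
      simp only [List.nil_append]
      show (if ([i] : List ℕ) = [] then p else ps.getD ([i] : List ℕ).headI p) = ps[i]
      rw [if_neg (by simp)]
      exact List.getD_eq_getElem ps p h1
    rw [he]
    exact hmem
  · intro v b i hv hvl hi hni
    have hv0 : v = [] := hv
    subst hv0
    have hb : b = a0 := by rw [ha0] at hvl; exact ((Option.some.injEq _ _).mp hvl.symm)
    subst hb
    rw [List.nil_append]
    show Quotient.mk s (if ([i] : List ℕ) = [] then p else ps.getD ([i] : List ℕ).headI p) = F [i]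
    rw [if_neg (by simp)]
    have h1 : i < ps.length := hlen i hi
    show Quotient.mk s (ps.getD i p) = F [i]
    rw [List.getD_eq_getElem ps p h1]
    exact hcl i h1 hi

end GFQBase

section GFQStep

variable {Q α : Type} {rank : α → ℕ}

private lemma step_lemma (A : TDTA Q α rank) (s : Setoid Q)
    (hs : ∀ q r, s.r q r ↔ (A.upIncl Eq q r ∧ A.upIncl Eq r q))
    (t : RTree α rank) (F : List ℕ → Quotient s)
    (hF : (A.quotAut s).IsRun t F)
    (S : Set (List ℕ)) (h0S : [] ∈ S)
    (hSpc : ∀ u v : List ℕ, u <+: v → v ∈ S → u ∈ S)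
    (v0 : List ℕ) (hv0N : t.label v0 ≠ none) (hv0S : v0 ∉ S)
    (hv0pre : ∀ u, u <+: v0 → u ≠ v0 → u ∈ S)
    (ρ : List ℕ → Q) (hρ : A.IsRun (trunc t S) ρ) (hρ0 : ρ [] ∈ A.init)
    (hfr : ∀ v a i, v ∈ S → t.label v = some a → i < rank a → (v ++ [i]) ∉ S →
      Quotient.mk s (ρ (v ++ [i])) = F (v ++ [i])) :
    ∃ ρ', A.IsRun (trunc t (S ∪ {v0})) ρ' ∧ ρ' [] ∈ A.init ∧
      ∀ v a i, v ∈ S ∪ {v0} → t.label v = some a → i < rank a → (v ++ [i]) ∉ S ∪ {v0} →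
        Quotient.mk s (ρ' (v ++ [i])) = F (v ++ [i]) := by
  classical
  have hv0ne : v0 ≠ [] := fun h => hv0S (h ▸ h0S)
  obtain ⟨a, ha⟩ := Option.ne_none_iff_exists'.mp hv0N
  obtain ⟨v', i0, hv0eq⟩ : ∃ v' i0, v0 = v' ++ [i0] := by
    rcases List.eq_nil_or_concat v0 with h | ⟨L, b, h⟩
    · exact absurd h hv0ne
    · exact ⟨L, b, by simpa using h⟩
  have hv'S : v' ∈ S := hv0pre v' (hv0eq ▸ List.prefix_append v' [i0])
      (fun h => by simp [h] at hv0eq)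
  obtain ⟨a', ha', hi0⟩ := t.prefixClosed v' i0 (by rw [← hv0eq]; exact hv0N)
  have hclass : Quotient.mk s (ρ v0) = F v0 := by
    have h1 := hfr v' a' i0 hv'S ha' hi0 (by rw [← hv0eq]; exact hv0S)
    rw [← hv0eq] at h1
    exact h1
  obtain ⟨p, ps, hmem, hFp, hcl⟩ := quot_rule A s hF ha
  obtain ⟨hupA, hupB⟩ := up_pair A s hs (hclass.trans hFp)
  obtain ⟨π0, hπ0run, hπ00⟩ := run_transfer A hmem hupB
  have hqs : (ρ v0, a, A.rhsOf a π0 []) ∈ A.delta := by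
    have h3 := hπ0run [] a (by simp [oneTree])
    rwa [hπ00] at h3
  set qs := A.rhsOf a π0 [] with hqsdef
  -- prefix combinatorics helpers
  have hanti : ∀ u w : List ℕ, u <+: w → w <+: u → u = w := fun u w h1 h2 =>
    h1.eq_of_length (le_antisymm h1.length_le h2.length_le)
  have hnd : ∀ w, w ∈ S → ¬ v0 <+: w := fun w hw hpre => hv0S (hSpc v0 w hpre hw)
  have hnotc : ∀ w : List ℕ, ¬ v0 <+: w → ∀ x : ℕ, w ++ [x] ≠ v0 → ¬ v0 <+: w ++ [x] := by
    intro w hw x hne hpre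
    have h1 : v0.length < w.length + 1 := by
      rcases Nat.lt_or_ge v0.length (w.length + 1) with h | h
      · exact h
      · have hle : v0.length ≤ (w ++ [x]).length := hpre.length_le
        have h2 : v0 = w ++ [x] := hpre.eq_of_length (by simp at hle ⊢; omega)
        exact absurd h2.symm hne
    exact hw (List.prefix_of_prefix_length_le hpre (List.prefix_append w [x])
      (Nat.lt_succ_iff.mp h1))
  have hpreT : ∀ u, u <+: v0 → u ∈ S ∪ {v0} := by
    intro u hu
    by_cases h : u = v0
    · exact Or.inr h
    · exact Or.inl (hv0pre u hu h)
  have ht'v0 : (trunc t (S ∪ {v0})).label v0 = some a := by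
    rw [trunc_label_eq t _ v0 hpreT]; exact ha
  have ht'S : ∀ w, w ∈ S → (∀ u, u <+: w → u ∈ S ∪ {v0}) →
      (trunc t (S ∪ {v0})).label w = (trunc t S).label w := by
    intro w hw hall
    have hallS : ∀ u, u <+: w → u ∈ S := by
      intro u hu
      rcases hall u hu with h | h
      · exact h
      · exact absurd (show v0 <+: w by rw [← (h : u = v0)]; exact hu) (hnd w hw)
    rw [trunc_label_eq t (S ∪ {v0}) w (fun u hu => Or.inl (hallS u hu)), trunc_label_eq t S w hallS]
  -- first repaired run ρ1
  set ρ1 : List ℕ → Q := fun w =>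
    if v0 <+: w ∧ w ≠ v0 then qs.getD (w.drop v0.length).headI (ρ w) else ρ w with hρ1def
  have hρ1eq : ∀ w, ¬ (v0 <+: w ∧ w ≠ v0) → ρ1 w = ρ w := by
    intro w h
    rw [hρ1def]
    simp only []
    rw [if_neg h]
  have hρ1v0 : ρ1 v0 = ρ v0 := hρ1eq v0 (by simp)
  have hρ1child : ∀ (j : ℕ) (h1 : j < qs.length), j < rank a → ρ1 (v0 ++ [j]) = qs[j] := by
    intro j h1 _
    rw [hρ1def]
    simp only []
    rw [if_pos ⟨List.prefix_append v0 [j], by simp⟩, List.drop_left]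
    exact List.getD_eq_getElem qs _ h1
  have hρ1S : ∀ w, w ∈ S → ∀ x : ℕ, ρ1 (w ++ [x]) = ρ (w ++ [x]) := by
    intro w hw x
    apply hρ1eq
    rintro ⟨h1, h2⟩
    exact hnotc w (hnd w hw) x h2 h1
  have hρ1run : A.IsRun (trunc t (S ∪ {v0})) ρ1 := by
    intro w b hw
    obtain ⟨hall, hwl⟩ := trunc_label_cases hw
    rcases hall w (List.prefix_refl w) with hwS | hwv
    · have hts : (trunc t S).label w = some b := by rw [← ht'S w hwS hall]; exact hw
      have h1 := hρ w b hts
      have h2 : ρ1 w = ρ w := hρ1eq w (fun hc => hnd w hwS hc.1)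
      have h3 : A.rhsOf b ρ1 w = A.rhsOf b ρ w :=
        rhsOf_congr A b ρ1 ρ w (fun i _ => hρ1S w hwS i)
      rw [h2, h3]
      exact h1
    · have hwv : w = v0 := hwv
      subst hwv
      have hb : b = a := by rw [ha] at hwl; exact (Option.some.injEq _ _).mp hwl.symm
      subst hb
      have he : A.rhsOf b ρ1 w = qs := rhsOf_eq A hqs ρ1 w hρ1child
      rw [hρ1v0, he]
      exact hqs
  have hleaf : (trunc t (S ∪ {v0})).IsLeaf v0 := by
    constructor
    · rw [ht'v0]; exact Option.some_ne_none a
    · intro j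
      apply trunc_label_none
      intro hc
      rcases hc (v0 ++ [j]) (List.prefix_refl _) with h | h
      · exact hnd _ h (List.prefix_append v0 [j])
      · have h2 : v0 ++ [j] = v0 := h
        simp at h2
  obtain ⟨πr, hπrrun, hπrv0, hπrinit, hπroff⟩ :=
    hupA.2 (trunc t (S ∪ {v0})) v0 hleaf ρ1 hρ1run hρ1v0
  -- second repaired run ρ2
  set ρ2 : List ℕ → Q := fun w =>
    if w <+: v0 then πr w
    else if v0 <+: w ∧ w ≠ v0 then ps.getD (w.drop v0.length).headI (ρ w) else ρ w with hρ2def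
  have hρ2path : ∀ w, w <+: v0 → ρ2 w = πr w := by
    intro w h
    rw [hρ2def]
    simp only []
    rw [if_pos h]
  have hρ2child : ∀ (j : ℕ) (h1 : j < ps.length), ρ2 (v0 ++ [j]) = ps[j] := by
    intro j h1
    rw [hρ2def]
    simp only []
    rw [if_neg, if_pos ⟨List.prefix_append v0 [j], by simp⟩, List.drop_left]
    · exact List.getD_eq_getElem ps _ h1
    · intro hc
      have h2 := hanti _ _ hc (List.prefix_append v0 [j])
      simp at h2
  have hρ2other : ∀ w, ¬ w <+: v0 → ¬ (v0 <+: w ∧ w ≠ v0) → ρ2 w = ρ w := by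
    intro w h1 h2
    rw [hρ2def]
    simp only []
    rw [if_neg h1, if_neg h2]
  have hcondf : ∀ u, u <+: v0 → u ≠ v0 → ∀ x : ℕ, ¬ (u ++ [x]) <+: v0 →
      ¬ (v0 <+: u ++ [x] ∧ u ++ [x] ≠ v0) := by
    rintro u hu hune x hnp ⟨h1, h2⟩
    exact hnotc u (fun h => hune (hanti u v0 hu h)) x h2 h1
  have hoffval : ∀ u, u <+: v0 → u ≠ v0 → ∀ x : ℕ, ¬ (u ++ [x]) <+: v0 →
      ρ2 (u ++ [x]) = ρ (u ++ [x]) := by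
    intro u hu hune x hnp
    exact hρ2other _ hnp (hcondf u hu hune x hnp)
  have hoffπr : ∀ u (b : α), (trunc t (S ∪ {v0})).label u = some b → u <+: v0 → u ≠ v0 →
      ∀ x : ℕ, x < rank b → ¬ (u ++ [x]) <+: v0 → ρ2 (u ++ [x]) = πr (u ++ [x]) := by
    intro u b hub hu hune x hx hnp
    have h1 := hπroff u x hu hune (Or.inr ⟨u, x, b, rfl, hub, hx⟩) hnp
    rw [hoffval u hu hune x hnp, ← hρ1eq _ (hcondf u hu hune x hnp)]
    exact h1
  have hρ2run : A.IsRun (trunc t (S ∪ {v0})) ρ2 := by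
    intro w b hw
    obtain ⟨hall, hwl⟩ := trunc_label_cases hw
    by_cases hwp : w <+: v0
    · by_cases hwv : w = v0
      · subst hwv
        have hb : b = a := by rw [ha] at hwl; exact (Option.some.injEq _ _).mp hwl.symm
        subst hb
        have he : A.rhsOf b ρ2 w = ps := by
          apply rhsOf_eq A hmem
          intro i h1 _
          exact hρ2child i h1
        rw [hρ2path w (List.prefix_refl w), hπrv0, he]
        exact hmem
      · have h1 := hπrrun w b hw
        have h2 : A.rhsOf b ρ2 w = A.rhsOf b πr w := by
          apply rhsOf_congr
          intro x hx
          by_cases hp : (w ++ [x]) <+: v0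
          · exact hρ2path _ hp
          · exact hoffπr w b hw hwp hwv x hx hp
        rw [hρ2path w hwp, h2]
        exact h1
    · have hwS : w ∈ S := by
        rcases hall w (List.prefix_refl w) with h | h
        · exact h
        · exact absurd (show w <+: v0 by rw [(h : w = v0)]) hwp
      have hts : (trunc t S).label w = some b := by rw [← ht'S w hwS hall]; exact hw
      have h1 := hρ w b hts
      have hcnd : ¬ (v0 <+: w ∧ w ≠ v0) := fun hc => hnd w hwS hc.1
      have h2 : ρ2 w = ρ w := hρ2other w hwp hcnd
      have h3 : A.rhsOf b ρ2 w = A.rhsOf b ρ w := by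
        apply rhsOf_congr
        intro x hx
        have hxp : ¬ (w ++ [x]) <+: v0 := fun hc => hwp ((List.prefix_append w [x]).trans hc)
        apply hρ2other _ hxp
        rintro ⟨hc1, hc2⟩
        exact hnotc w (hnd w hwS) x hc2 hc1
      rw [h2, h3]
      exact h1
  have hρ2init : ρ2 [] ∈ A.init := by
    have h1 : ρ1 [] = ρ [] := hρ1eq [] (by
      rintro ⟨hc, -⟩
      exact hv0ne (List.prefix_nil.mp hc))
    have h2 := hπrinit [] (List.nil_prefix) (by rw [h1]; exact hρ0)
    rw [hρ2path [] (List.nil_prefix)]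
    exact h2
  refine ⟨ρ2, hρ2run, hρ2init, ?_⟩
  intro w b x hwT hwl hx hxT
  have hxS : (w ++ [x]) ∉ S := fun h => hxT (Or.inl h)
  have hxv0 : (w ++ [x]) ≠ v0 := fun h => hxT (Or.inr h)
  rcases hwT with hwS | hwv
  · have hwne : w ≠ v0 := fun h => hv0S (h ▸ hwS)
    have hval : ρ2 (w ++ [x]) = ρ (w ++ [x]) := by
      by_cases hwp : w <+: v0
      · have hxp : ¬ (w ++ [x]) <+: v0 := by
          intro hc
          by_cases h : (w ++ [x]) = v0
          · exact hxv0 h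
          · exact hxT (Or.inl (hv0pre _ hc h))
        exact hoffval w hwp hwne x hxp
      · apply hρ2other _ (fun hc => hwp ((List.prefix_append w [x]).trans hc))
        rintro ⟨hc1, hc2⟩
        exact hnotc w (hnd w hwS) x hc2 hc1
    rw [hval]
    exact hfr w b x hwS hwl hx hxS
  · have hwv : w = v0 := hwv
    subst hwv
    have hb : b = a := by rw [ha] at hwl; exact (Option.some.injEq _ _).mp hwl.symm
    subst hb
    have h1 : x < ps.length := by
      rw [(A.rank_ok _ hmem).2 (Nat.pos_of_ne_zero (Nat.ne_zero_of_lt hx))]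
      exact hx
    rw [hρ2child x h1]
    exact hcl x h1 hx

end GFQStep

/-- The equivalence `≡up(id) = ⊆up(id) ∩ ⊇up(id)` is good for quotienting. -/
theorem statement_9 {Q α : Type} [Fintype Q] [Fintype α] {rank : α → ℕ}
    (A : TDTA Q α rank) (s : Setoid Q)
    (hs : ∀ q r, s.r q r ↔ (A.upIncl Eq q r ∧ A.upIncl Eq r q)) :
    (A.quotAut s).lang = A.lang := by
  classical
  apply Set.eq_of_subset_of_subset
  · -- L(A/≡) ⊆ L(A)
    rintro t ⟨x, hx, htc, F, hF, hFx⟩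
    obtain ⟨q0, hq0, hq0x⟩ := hx
    by_cases h0 : t.label [] = none
    · refine ⟨q0, hq0, htc, fun _ => q0, ?_, rfl⟩
      intro v a hv
      exact absurd h0 (RTree.label_ne_none_of_prefix t v []
        (by rw [List.nil_append, hv]; exact Option.some_ne_none a))
    · obtain ⟨a0, ha0⟩ := Option.ne_none_iff_exists'.mp h0
      have claim : ∀ n : ℕ, ∀ S : Set (List ℕ), [] ∈ S → (∀ v ∈ S, t.label v ≠ none) →
          (∀ u v : List ℕ, u <+: v → v ∈ S → u ∈ S) →
          (∃ ρ, A.IsRun (trunc t S) ρ ∧ ρ [] ∈ A.init ∧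
            ∀ v a i, v ∈ S → t.label v = some a → i < rank a → (v ++ [i]) ∉ S →
              Quotient.mk s (ρ (v ++ [i])) = F (v ++ [i])) →
          ({v | t.label v ≠ none} \ S).ncard ≤ n →
          ∃ π, A.IsRun t π ∧ π [] ∈ A.init := by
        intro n
        induction n with
        | zero =>
          rintro S hS0 hSN hSpc ⟨ρ, h1, h2, h3⟩ hcard
          have hfin : ({v | t.label v ≠ none} \ S).Finite := t.finite.subset Set.diff_subset
          have hempty : {v | t.label v ≠ none} \ S = ∅ :=
            (Set.ncard_eq_zero hfin).mp (Nat.le_zero.mp hcard)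
          have hsub : ∀ v, t.label v ≠ none → v ∈ S := by
            intro v hv
            by_contra hvS
            exact (Set.eq_empty_iff_forall_notMem.mp hempty v) ⟨hv, hvS⟩
          exact ⟨ρ, run_of_trunc A t S hsub h1, h2⟩
        | succ n ih =>
          intro S hS0 hSN hSpc hInv hcard
          by_cases hsub : ∀ v, t.label v ≠ none → v ∈ S
          · obtain ⟨ρ, h1, h2, h3⟩ := hInv
            exact ⟨ρ, run_of_trunc A t S hsub h1, h2⟩
          · push_neg at hsub
            obtain ⟨w0, hw0N, hw0S⟩ := hsub
            have hfin : ({v | t.label v ≠ none} \ S).Finite := t.finite.subset Set.diff_subset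
            have hne : ({v | t.label v ≠ none} \ S).Nonempty := ⟨w0, hw0N, hw0S⟩
            obtain ⟨v0, hv0D, hv0min⟩ := Set.exists_min_image _ List.length hfin hne
            obtain ⟨hv0N, hv0S⟩ := hv0D
            have hv0pre : ∀ u, u <+: v0 → u ≠ v0 → u ∈ S := by
              intro u hu hune
              have huN : t.label u ≠ none := by
                obtain ⟨w, hw⟩ := hu
                exact RTree.label_ne_none_of_prefix t w u (by rw [hw]; exact hv0N)
              by_contra huS
              have hlen := hv0min u ⟨huN, huS⟩
              have hlt : u.length < v0.length := by
                rcases Nat.lt_or_ge u.length v0.length with h | h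
                · exact h
                · exact absurd (hu.eq_of_length (le_antisymm hu.length_le h)) hune
              omega
            obtain ⟨ρ, h1, h2, h3⟩ := hInv
            obtain ⟨ρ', h1', h2', h3'⟩ :=
              step_lemma A s hs t F hF S hS0 hSpc v0 hv0N hv0S hv0pre ρ h1 h2 h3
            apply ih (S ∪ {v0})
            · exact Or.inl hS0
            · rintro v (hv | hv)
              · exact hSN v hv
              · rw [(hv : v = v0)]; exact hv0N
            · rintro u v hu (hv | hv)
              · exact Or.inl (hSpc u v hu hv)
              · by_cases h : u = v0
                · exact Or.inr h
                · exact Or.inl (hv0pre u (by rw [← (hv : v = v0)]; exact hu) h)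
            · exact ⟨ρ', h1', h2', h3'⟩
            · have hrw : {v | t.label v ≠ none} \ (S ∪ {v0}) =
                  ({v | t.label v ≠ none} \ S) \ {v0} := (Set.diff_diff).symm
              rw [hrw]
              have hlt := Set.ncard_diff_singleton_lt_of_mem
                (show v0 ∈ {v | t.label v ≠ none} \ S from ⟨hv0N, hv0S⟩) hfin
              omega
      have hF0 : F [] = Quotient.mk s q0 := by rw [hFx, hq0x]
      obtain ⟨ρb, hb1, hb2, hb3⟩ := base_lemma A s hs t F hF ha0 hq0 hF0
      obtain ⟨π, hπ, hπ0⟩ := claim ({v | t.label v ≠ none}).ncard {[]} rfl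
        (by intro v hv; rw [(hv : v = [])]; exact h0)
        (by intro u v hu hv; rw [(hv : v = [])] at hu; exact List.prefix_nil.mp hu)
        ⟨ρb, hb1, hb2, hb3⟩
        (Set.ncard_le_ncard Set.diff_subset t.finite)
      exact ⟨π [], hπ0, htc, π, hπ, rfl⟩
  · -- L(A) ⊆ L(A/≡)
    rintro t ⟨q, hq, htc, π, hπ, hπ0⟩
    refine ⟨Quotient.mk s q, ⟨q, hq, rfl⟩, htc, fun w => Quotient.mk s (π w), ?_,
      by show Quotient.mk s (π []) = Quotient.mk s q; rw [hπ0]⟩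
    intro v a hv
    refine ⟨π v, a, A.rhsOf a π v, hπ v a hv, ?_⟩
    have h2 : (A.quotAut s).rhsOf a (fun w => Quotient.mk s (π w)) v
        = (A.rhsOf a π v).map (fun p => Quotient.mk s p) := by
      unfold TDTA.rhsOf
      by_cases h0 : rank a = 0
      · rw [if_pos h0, if_pos h0]
        rfl
      · rw [if_neg h0, if_neg h0, List.map_map]
        rfl
    rw [h2]
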